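/- arXiv:2204.09910 — 2 statements merged into one kernel-verified Lean document; each statement's English description precedes it below -/
import Mathlib

section
/- In the ring of formal power series over \mathbb{Z}[t,s], the generating function of the Hankel determinants d_1(n,t,s) = \det( M_{1+i+j,0}(t,s) )_{i,j=0}^{n-1} (with d_1(0,t,s) = 1) satisfies (1 - tx + x^2) \cdot \sum_{n \geq 0} d_1(n,t,s) x^n = 1 + (s-t)x. -/
open MvPolynomial

/-- Abbreviation: the variable `t` (weight of horizontal steps at positive height). -/
noncomputable abbrev tVar : MvPolynomial (Fin 2) ℤ := MvPolynomial.X 0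

/-- Abbreviation: the variable `s` (weight of horizontal steps at height `0`). -/
noncomputable abbrev sVar : MvPolynomial (Fin 2) ℤ := MvPolynomial.X 1

/-- The weight polynomials `M_{n,k}(t,s)` of Motzkin paths from `(0,0)` to `(n,k)`,
where horizontal steps at height `0` have weight `s` and at positive height weight `t`:
`M_{n,0} = s·M_{n-1,0} + M_{n-1,1}`, and for `k ≥ 1`
`M_{n,k} = M_{n-1,k-1} + t·M_{n-1,k} + M_{n-1,k+1}`, with `M_{n,k} = 0` for `k < 0`
and `M_{0,k} = [k = 0]`. -/
noncomputable def motzkinPoly2 : ℕ → ℤ → MvPolynomial (Fin 2) ℤ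
  | 0, k => if k = 0 then 1 else 0
  | n + 1, k =>
      if k < 0 then 0 else
      if k = 0 then sVar * motzkinPoly2 n 0 + motzkinPoly2 n 1
      else motzkinPoly2 n (k - 1) + tVar * motzkinPoly2 n k + motzkinPoly2 n (k + 1)
  termination_by n _ => n

open Finset

noncomputable def motz (n k : ℕ) : MvPolynomial (Fin 2) ℤ := motzkinPoly2 n (k : ℤ)

lemma motz_zero (k : ℕ) : motz 0 k = if k = 0 then 1 else 0 := by
  simp [motz, motzkinPoly2]

lemma motz_rec0 (n : ℕ) : motz (n+1) 0 = sVar * motz n 0 + motz n 1 := by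
  simp [motz, motzkinPoly2]

lemma motz_recS (n k : ℕ) : motz (n+1) (k+1) = motz n k + tVar * motz n (k+1) + motz n (k+2) := by
  rw [motz, motzkinPoly2, if_neg (by push_cast; omega), if_neg (by push_cast; omega)]
  have e1 : ((k+1:ℕ):ℤ) - 1 = ((k:ℕ):ℤ) := by push_cast; ring
  have e2 : ((k+1:ℕ):ℤ) + 1 = ((k+2:ℕ):ℤ) := by push_cast; ring
  rw [e1, e2]; rfl

lemma motz_of_lt : ∀ n k, n < k → motz n k = 0 := by
  intro n
  induction n with
  | zero => intro k hk; rw [motz_zero, if_neg (by omega)]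
  | succ n ih =>
    intro k hk
    obtain ⟨k, rfl⟩ : ∃ m, k = m + 1 := ⟨k - 1, by omega⟩
    rw [motz_recS, ih k (by omega), ih (k+1) (by omega), ih (k+2) (by omega)]
    ring

lemma motz_diag : ∀ n, motz n n = 1 := by
  intro n
  induction n with
  | zero => simp [motz_zero]
  | succ n ih =>
    rw [motz_recS, ih, motz_of_lt n (n+1) (by omega), motz_of_lt n (n+2) (by omega)]
    ring

/-- entries of the tridiagonal Jacobi matrix -/
noncomputable def Jent (k l : ℕ) : MvPolynomial (Fin 2) ℤ :=
  if k = l then (if k = 0 then sVar else tVar)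
  else if k + 1 = l ∨ l + 1 = k then 1 else 0

lemma Jent_symm (k l : ℕ) : Jent k l = Jent l k := by
  unfold Jent
  split_ifs <;> first | rfl | omega

lemma step (N j k : ℕ) (h : j < N ∨ k + 2 ≤ N) :
    motz (j+1) k = ∑ l ∈ range N, motz j l * Jent l k := by
  have hmem : ∀ c : ℕ, ∀ x : MvPolynomial (Fin 2) ℤ, (N ≤ c → x * motz j c = 0) →
      (if c ∈ range N then x * motz j c else 0) = x * motz j c := by
    intro c x hx
    split_ifs with hc
    · rfl
    · rw [mem_range, not_lt] at hc; exact (hx hc).symm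
  cases k with
  | zero =>
    have hsplit : ∀ l, motz j l * Jent l 0 =
        (if 0 = l then sVar * motz j l else 0) + (if 1 = l then 1 * motz j l else 0) := by
      intro l
      unfold Jent
      split_ifs <;> first | (exfalso; omega) | ring1 | (exfalso; simp only [false_or, or_false] at *; omega)
    rw [Finset.sum_congr rfl fun l _ => hsplit l, Finset.sum_add_distrib,
      Finset.sum_ite_eq, Finset.sum_ite_eq]
    rw [hmem 0 sVar (by intro hc; rcases h with h|h <;> omega),
      hmem 1 1 (by
        intro hc
        rw [motz_of_lt j 1 (by rcases h with h|h <;> omega), mul_zero])]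
    rw [motz_rec0]; ring
  | succ k =>
    have hsplit : ∀ l, motz j l * Jent l (k+1) =
        (if k = l then 1 * motz j l else 0) + (if k+1 = l then tVar * motz j l else 0)
          + (if k+2 = l then 1 * motz j l else 0) := by
      intro l
      unfold Jent
      split_ifs <;> first | (exfalso; omega) | ring1 | (exfalso; simp only [false_or, or_false] at *; omega)
    rw [Finset.sum_congr rfl fun l _ => hsplit l, Finset.sum_add_distrib,
      Finset.sum_add_distrib, Finset.sum_ite_eq, Finset.sum_ite_eq, Finset.sum_ite_eq]
    rw [hmem k 1 (by intro hc; rw [motz_of_lt j k (by rcases h with h|h <;> omega), mul_zero]),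
      hmem (k+1) tVar
        (by intro hc; rw [motz_of_lt j (k+1) (by rcases h with h|h <;> omega), mul_zero]),
      hmem (k+2) 1
        (by intro hc; rw [motz_of_lt j (k+2) (by rcases h with h|h <;> omega), mul_zero])]
    rw [motz_recS]; ring

noncomputable def Tent (k l : ℕ) : MvPolynomial (Fin 2) ℤ :=
  if k = l then tVar else if k + 1 = l ∨ l + 1 = k then 1 else 0

lemma Jent_succ (k l : ℕ) : Jent (k+1) (l+1) = Tent k l := by
  unfold Jent Tent
  split_ifs <;> first | rfl | exact absurd rfl (by omega) | exact ‹False›.elim | (exfalso; omega)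

lemma Tent_succ (k l : ℕ) : Tent (k+1) (l+1) = Tent k l := by
  unfold Tent
  split_ifs <;> first | rfl | exact absurd rfl (by omega) | exact ‹False›.elim | (exfalso; omega)

lemma succAbove_one_val (m : ℕ) (l : Fin (m+1)) :
    (((1:Fin (m+2)).succAbove l) : ℕ) = if (l:ℕ) = 0 then 0 else (l:ℕ)+1 := by
  rcases l with ⟨lv, hl⟩
  simp only [Fin.succAbove, Fin.lt_def, Fin.coe_castSucc, Fin.val_one]
  split_ifs <;> simp_all

lemma succAbove_one_zero_val (m : ℕ) : (((1:Fin (m+2)).succAbove 0) : ℕ) = 0 := by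
  rw [succAbove_one_val]; simp

lemma succAbove_one_succ_val (m : ℕ) (l : Fin m) :
    (((1:Fin (m+2)).succAbove l.succ) : ℕ) = (l:ℕ) + 2 := by
  rw [succAbove_one_val]
  simp [Fin.val_succ]

lemma det_tri (n : ℕ) (f : ℕ → ℕ → MvPolynomial (Fin 2) ℤ)
    (h0 : ∀ j : ℕ, 2 ≤ j → f 0 j = 0) (hc : ∀ i : ℕ, 1 ≤ i → f (i+1) 0 = 0) :
    Matrix.det (Matrix.of fun k l : Fin (n+2) => f k l)
      = f 0 0 * Matrix.det (Matrix.of fun k l : Fin (n+1) => f (k+1) (l+1))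
        - f 0 1 * (f 1 0 * Matrix.det (Matrix.of fun k l : Fin n => f (k+2) (l+2))) := by
  rw [Matrix.det_succ_row_zero]
  rw [Finset.sum_eq_add_of_mem 0 1 (Finset.mem_univ _) (Finset.mem_univ _)
    (by simp [Fin.ext_iff])
    (by
      intro c _ hcne
      have h0' : (c:ℕ) ≠ 0 := fun h => hcne.1 (Fin.ext (by simp [h]))
      have h1' : (c:ℕ) ≠ 1 := fun h => hcne.2 (Fin.ext (by simp [h]))
      simp only [Matrix.of_apply, Fin.val_zero]
      rw [h0 (c:ℕ) (by omega), mul_zero, zero_mul])]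
  have e1 : Matrix.det ((Matrix.of fun k l : Fin (n+2) => f k l).submatrix
      Fin.succ ((0 : Fin (n+2)).succAbove))
      = Matrix.det (Matrix.of fun k l : Fin (n+1) => f (k+1) (l+1)) := by
    congr 1
  have e2 : Matrix.det ((Matrix.of fun k l : Fin (n+2) => f k l).submatrix
      Fin.succ ((1 : Fin (n+2)).succAbove))
      = f 1 0 * Matrix.det (Matrix.of fun k l : Fin n => f (k+2) (l+2)) := by
    rw [Matrix.det_succ_column_zero]
    rw [Finset.sum_eq_single_of_mem 0 (Finset.mem_univ _)
      (by
        intro c _ hcne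
        have h0' : (c:ℕ) ≠ 0 := fun h => hcne (Fin.ext (by simp [h]))
        simp only [Matrix.submatrix_apply, Matrix.of_apply, Fin.val_succ]
        rw [succAbove_one_zero_val, hc (c:ℕ) (by omega), mul_zero, zero_mul])]
    have e3 : Matrix.det (((Matrix.of fun k l : Fin (n+2) => f k l).submatrix
        Fin.succ ((1 : Fin (n+2)).succAbove)).submatrix (0 : Fin (n+1)).succAbove Fin.succ)
        = Matrix.det (Matrix.of fun k l : Fin n => f (k+2) (l+2)) := by
      congr 1
    rw [e3]
    simp only [Matrix.submatrix_apply, Matrix.of_apply, Fin.val_succ, Fin.val_zero, pow_zero,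
      one_mul, succAbove_one_zero_val]
  rw [e1, e2]
  simp only [Matrix.of_apply, Fin.val_zero, Fin.val_one, pow_zero, pow_one, one_mul]
  ring

lemma shrink (a b N M : ℕ) (h : a < N ∨ b < N) (hNM : N ≤ M) :
    ∑ k ∈ range N, motz a k * motz b k = ∑ k ∈ range M, motz a k * motz b k := by
  apply Finset.sum_subset (Finset.range_subset_range.2 hNM)
  intro k _ hkN
  rw [Finset.mem_range, not_lt] at hkN
  rcases h with h|h
  · rw [motz_of_lt a k (by omega), zero_mul]
  · rw [motz_of_lt b k (by omega), mul_zero]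

lemma sym : ∀ b a : ℕ, motz (a+b) 0 = ∑ k ∈ range (b+1), motz a k * motz b k := by
  intro b
  induction b with
  | zero =>
    intro a
    rw [Nat.add_zero, Finset.sum_range_one, motz_zero, if_pos rfl, mul_one]
  | succ b ih =>
    intro a
    have h1 : a + (b+1) = (a+1) + b := by omega
    rw [h1, ih (a+1), shrink (a+1) b (b+1) (b+2) (Or.inr (by omega)) (by omega)]
    have h2 : ∀ k ∈ range (b+2), motz (a+1) k * motz b k
        = (∑ l ∈ range (b+2), motz a l * Jent l k) * motz b k := by
      intro k hk
      rw [Finset.mem_range] at hk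
      rcases Nat.lt_or_ge k (b+1) with hkb | hkb
      · rw [← step (b+2) a k (Or.inr (by omega))]
      · have hkk : k = b+1 := by omega
        subst hkk
        rw [motz_of_lt b (b+1) (by omega), mul_zero, mul_zero]
    rw [Finset.sum_congr rfl h2]
    simp only [Finset.sum_mul]
    rw [Finset.sum_comm]
    have h3 : ∀ l ∈ range (b+2), (∑ k ∈ range (b+2), motz a l * Jent l k * motz b k)
        = motz a l * motz (b+1) l := by
      intro l _
      rw [step (b+2) b l (Or.inl (by omega)), Finset.mul_sum]
      apply Finset.sum_congr rfl
      intro k _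
      rw [Jent_symm l k]
      ring
    rw [Finset.sum_congr rfl h3]

lemma hankel_entry (n : ℕ) (i j : Fin n) :
    motz (1 + (i:ℕ) + (j:ℕ)) 0
      = ∑ k ∈ range n, ∑ l ∈ range n, motz i k * (motz j l * Jent l k) := by
  have h1 : 1 + (i:ℕ) + (j:ℕ) = (i:ℕ) + ((j:ℕ)+1) := by omega
  rw [h1, sym ((j:ℕ)+1) i,
    shrink i ((j:ℕ)+1) ((j:ℕ)+1+1) (n+((j:ℕ)+2)) (Or.inr (by omega)) (by omega),
    ← shrink i ((j:ℕ)+1) n (n+((j:ℕ)+2)) (Or.inl i.isLt) (by omega)]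
  apply Finset.sum_congr rfl
  intro k _
  rw [step n j k (Or.inl j.isLt), Finset.mul_sum]

noncomputable def Dd (n : ℕ) : MvPolynomial (Fin 2) ℤ :=
  Matrix.det (Matrix.of fun k l : Fin n => Jent k l)

noncomputable def Td (n : ℕ) : MvPolynomial (Fin 2) ℤ :=
  Matrix.det (Matrix.of fun k l : Fin n => Tent k l)

lemma hankel_factor (n : ℕ) :
    (Matrix.of fun i j : Fin n => motz (1 + (i:ℕ) + (j:ℕ)) 0)
      = (Matrix.of fun i k : Fin n => motz i k) * (Matrix.of fun k l : Fin n => Jent k l)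
        * (Matrix.of fun l j : Fin n => motz j l) := by
  refine Matrix.ext fun i j => ?_
  rw [Matrix.mul_apply]
  simp only [Matrix.mul_apply, Matrix.of_apply, Finset.sum_mul]
  rw [hankel_entry n i j]
  rw [Finset.sum_comm]
  rw [← Fin.sum_univ_eq_sum_range (fun l => ∑ k ∈ range n, motz i k * (motz j l * Jent l k)) n]
  apply Finset.sum_congr rfl
  intro l _
  rw [← Fin.sum_univ_eq_sum_range (fun k => motz i k * (motz j (l:ℕ) * Jent (l:ℕ) k)) n]
  apply Finset.sum_congr rfl
  intro k _
  rw [Jent_symm (l:ℕ) (k:ℕ)]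
  ring

lemma det_A (n : ℕ) : Matrix.det (Matrix.of fun i k : Fin n => motz i k) = 1 := by
  rw [Matrix.det_of_lowerTriangular _ (by
    intro a b hab
    simp only [OrderDual.toDual_lt_toDual] at hab
    exact motz_of_lt a b (by exact_mod_cast hab))]
  exact Finset.prod_eq_one fun i _ => motz_diag (i:ℕ)

lemma det_B (n : ℕ) : Matrix.det (Matrix.of fun l j : Fin n => motz j l) = 1 := by
  rw [Matrix.det_of_upperTriangular (by
    intro a b hab
    simp only [id] at hab
    exact motz_of_lt b a (by exact_mod_cast hab))]
  exact Finset.prod_eq_one fun i _ => motz_diag (i:ℕ)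

lemma det_hankel (n : ℕ) :
    Matrix.det (Matrix.of fun i j : Fin n => motz (1 + (i:ℕ) + (j:ℕ)) 0) = Dd n := by
  rw [hankel_factor, Matrix.det_mul, Matrix.det_mul, det_A, det_B, Dd, one_mul, mul_one]

lemma Jent00 : Jent 0 0 = sVar := by simp [Jent]
lemma Jent01 : Jent 0 1 = 1 := by simp [Jent]
lemma Jent10 : Jent 1 0 = 1 := by simp [Jent]
lemma Tent00 : Tent 0 0 = tVar := by simp [Tent]
lemma Tent01 : Tent 0 1 = 1 := by simp [Tent]
lemma Tent10 : Tent 1 0 = 1 := by simp [Tent]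

lemma Dd_zero : Dd 0 = 1 := Matrix.det_fin_zero
lemma Td_zero : Td 0 = 1 := Matrix.det_fin_zero
lemma Dd_one : Dd 1 = sVar := by
  rw [Dd, Matrix.det_fin_one, Matrix.of_apply]
  exact Jent00
lemma Td_one : Td 1 = tVar := by
  rw [Td, Matrix.det_fin_one, Matrix.of_apply]
  exact Tent00

lemma Jent_0row (j : ℕ) (hj : 2 ≤ j) : Jent 0 j = 0 := by
  unfold Jent
  split_ifs <;> first | rfl | exact absurd rfl (by omega) | exact ‹False›.elim | (exfalso; omega) | (exfalso; simp only [false_or, or_false] at *; omega)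
lemma Jent_0col (i : ℕ) (hi : 1 ≤ i) : Jent (i+1) 0 = 0 := by
  unfold Jent
  split_ifs <;> first | rfl | exact absurd rfl (by omega) | exact ‹False›.elim | (exfalso; omega) | (exfalso; simp only [false_or, or_false] at *; omega)
lemma Tent_0row (j : ℕ) (hj : 2 ≤ j) : Tent 0 j = 0 := by
  unfold Tent
  split_ifs <;> first | rfl | exact absurd rfl (by omega) | exact ‹False›.elim | (exfalso; omega) | (exfalso; simp only [false_or, or_false] at *; omega)
lemma Tent_0col (i : ℕ) (hi : 1 ≤ i) : Tent (i+1) 0 = 0 := by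
  unfold Tent
  split_ifs <;> first | rfl | exact absurd rfl (by omega) | exact ‹False›.elim | (exfalso; omega) | (exfalso; simp only [false_or, or_false] at *; omega)

lemma Dd_minor (n : ℕ) : Dd (n+2) = sVar * Td (n+1) - Td n := by
  rw [Dd, det_tri n Jent Jent_0row Jent_0col]
  have e1 : (Matrix.of fun k l : Fin (n+1) => Jent (k+1) (l+1))
      = (Matrix.of fun k l : Fin (n+1) => Tent k l) :=
    Matrix.ext fun k l => Jent_succ k l
  have e2 : (Matrix.of fun k l : Fin n => Jent (k+2) (l+2))
      = (Matrix.of fun k l : Fin n => Tent k l) :=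
    Matrix.ext fun k l => (Jent_succ ((k:ℕ)+1) ((l:ℕ)+1)).trans (Tent_succ (k:ℕ) (l:ℕ))
  rw [e1, e2, Jent00, Jent01, Jent10, ← Td, ← Td]
  ring

lemma Td_rec (n : ℕ) : Td (n+2) = tVar * Td (n+1) - Td n := by
  rw [Td, det_tri n Tent Tent_0row Tent_0col]
  have e1 : (Matrix.of fun k l : Fin (n+1) => Tent (k+1) (l+1))
      = (Matrix.of fun k l : Fin (n+1) => Tent k l) :=
    Matrix.ext fun k l => Tent_succ k l
  have e2 : (Matrix.of fun k l : Fin n => Tent (k+2) (l+2))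
      = (Matrix.of fun k l : Fin n => Tent k l) :=
    Matrix.ext fun k l => (Tent_succ ((k:ℕ)+1) ((l:ℕ)+1)).trans (Tent_succ (k:ℕ) (l:ℕ))
  rw [e1, e2, Tent00, Tent01, Tent10, ← Td, ← Td]
  ring

lemma Dd_rec : ∀ n, Dd (n+2) = tVar * Dd (n+1) - Dd n := by
  intro n
  rcases n with _|n
  · rw [Dd_minor 0, Td_one, Td_zero, Dd_one, Dd_zero]; ring
  rcases n with _|n
  · have h1 : Td (1+1) = tVar * Td 1 - Td 0 := Td_rec 0
    have h2 : Dd (0+1) = sVar := Dd_one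
    have h3 : Td (0+1) = tVar := Td_one
    rw [Dd_minor 1, Dd_minor 0, h1, h2, h3, Td_zero]
    ring
  · rw [show (n+1+1+2 : ℕ) = (n+2)+2 from rfl, Dd_minor (n+2),
      show (n+1+1+1 : ℕ) = (n+1)+2 from rfl, Dd_minor (n+1),
      show (n+1+1 : ℕ) = n+2 from rfl, Dd_minor n,
      show (n+2+1 : ℕ) = (n+1)+2 from rfl, Td_rec (n+1),
      show (n+1+1 : ℕ) = n+2 from rfl, Td_rec n]
    ring

/-- `(1 - tx + x^2) · ∑_n d_1(n,t,s) x^n = 1 + (s-t)x` in `(ℤ[t,s])[[x]]`,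
where `d_1(n,t,s) = det(M_{1+i+j,0}(t,s))`. -/
theorem genfun_hankel_det_two_weights_shift_one :
    (1 - PowerSeries.C (R := MvPolynomial (Fin 2) ℤ) tVar * PowerSeries.X +
        PowerSeries.X ^ 2) *
      PowerSeries.mk (fun n =>
        Matrix.det (Matrix.of fun i j : Fin n =>
          motzkinPoly2 (1 + (i : ℕ) + (j : ℕ)) 0)) =
      1 + PowerSeries.C (R := MvPolynomial (Fin 2) ℤ) (sVar - tVar) * PowerSeries.X := by
  have hmk : PowerSeries.mk (fun n =>
        Matrix.det (Matrix.of fun i j : Fin n =>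
          motzkinPoly2 (1 + (i : ℕ) + (j : ℕ)) 0))
      = PowerSeries.mk (fun n => Dd n) := by
    refine congrArg PowerSeries.mk (funext fun n => ?_)
    have h : (Matrix.of fun i j : Fin n => motzkinPoly2 (1 + (i:ℕ) + (j:ℕ)) 0)
        = (Matrix.of fun i j : Fin n => motz (1 + (i:ℕ) + (j:ℕ)) 0) :=
      Matrix.ext fun i j => by unfold motz; norm_num
    rw [h, det_hankel]
  rw [hmk]
  have expand : (1 - PowerSeries.C (R := MvPolynomial (Fin 2) ℤ) tVar * PowerSeries.X +
        PowerSeries.X ^ 2) * PowerSeries.mk (fun n => Dd n)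
      = PowerSeries.mk (fun n => Dd n)
        - PowerSeries.C (R := MvPolynomial (Fin 2) ℤ) tVar *
            (PowerSeries.X * PowerSeries.mk (fun n => Dd n))
        + PowerSeries.X * (PowerSeries.X * PowerSeries.mk (fun n => Dd n)) := by
    ring
  rw [expand]
  apply PowerSeries.ext
  intro n
  rcases n with _|n
  · simp only [map_add, map_sub, PowerSeries.coeff_mk, PowerSeries.coeff_C_mul,
      PowerSeries.coeff_zero_X_mul, PowerSeries.coeff_one, PowerSeries.coeff_X, Dd_zero,
      mul_zero, sub_zero, add_zero, if_pos rfl]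
    norm_num
  rcases n with _|n
  · simp only [map_add, map_sub, PowerSeries.coeff_mk, PowerSeries.coeff_C_mul,
      PowerSeries.coeff_succ_X_mul, PowerSeries.coeff_zero_X_mul, PowerSeries.coeff_one,
      PowerSeries.coeff_X, Dd_zero, Dd_one]
    norm_num
    exact Dd_one
  · simp only [map_add, map_sub, PowerSeries.coeff_mk, PowerSeries.coeff_C_mul,
      PowerSeries.coeff_succ_X_mul, PowerSeries.coeff_one, PowerSeries.coeff_X]
    rw [Dd_rec n]
    norm_num
end

section
/- In the ring of formal power series over \mathbb{Z}[t,s], the generating function of the Hankel determinants d_2(n,t,s) = \det( M_{2+i+j,0}(t,s) )_{i,j=0}^{n-1} (with d_2(0,t,s) = 1) satisfies (1-x)^2 (1 + (2-t^2)x + x^2) \cdot \sum_{n \geq 0} d_2(n,t,s) x^n = 1 + (1 + s^2 - t^2)x + (s-t)^2 x^2. -/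
open MvPolynomial

local notation "R" => MvPolynomial (Fin 2) ℤ
open Matrix

/-- `Mk n k = M_{n,k}` with natural-number height. -/
noncomputable def Mk (n k : ℕ) : R := motzkinPoly2 n (k : ℤ)

lemma Mk_zero_zero : Mk 0 0 = 1 := by simp [Mk, motzkinPoly2]

lemma Mk_zero_succ (k : ℕ) : Mk 0 (k + 1) = 0 := by
  simp [Mk, motzkinPoly2]
  omega

lemma Mk_succ_zero (n : ℕ) : Mk (n + 1) 0 = sVar * Mk n 0 + Mk n 1 := by
  simp [Mk, motzkinPoly2]

lemma motzkinPoly2_succ (n : ℕ) (k : ℤ) (h0 : ¬ (k < 0)) (h1 : ¬ (k = 0)) :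
    motzkinPoly2 (n+1) k
      = motzkinPoly2 n (k-1) + tVar * motzkinPoly2 n k + motzkinPoly2 n (k+1) := by
  rw [motzkinPoly2]
  rw [if_neg h0, if_neg h1]

lemma Mk_succ_succ (n k : ℕ) :
    Mk (n + 1) (k + 1) = Mk n k + tVar * Mk n (k + 1) + Mk n (k + 2) := by
  show motzkinPoly2 (n+1) (((k : ℕ) + 1 : ℕ) : ℤ) = _
  rw [show ((((k : ℕ) + 1 : ℕ)) : ℤ) = (k : ℤ) + 1 by push_cast; ring]
  rw [motzkinPoly2_succ n _ (by omega) (by omega)]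
  have e1 : (k : ℤ) + 1 - 1 = ((k : ℕ) : ℤ) := by ring
  have e2 : (k : ℤ) + 1 + 1 = ((k + 2 : ℕ) : ℤ) := by push_cast; ring
  have e3 : (k : ℤ) + 1 = ((k + 1 : ℕ) : ℤ) := by push_cast; ring
  rw [e1, e2, e3]
  rfl

lemma Mk_eq_zero {n k : ℕ} (h : n < k) : Mk n k = 0 := by
  induction n generalizing k with
  | zero =>
    obtain ⟨m, rfl⟩ : ∃ m, k = m + 1 := ⟨k - 1, by omega⟩
    exact Mk_zero_succ m
  | succ n ih =>
    obtain ⟨m, rfl⟩ : ∃ m, k = m + 1 := ⟨k - 1, by omega⟩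
    rw [Mk_succ_succ]
    rw [ih (by omega), ih (by omega), ih (by omega)]; ring
    
lemma Mk_diag (n : ℕ) : Mk n n = 1 := by
  induction n with
  | zero => exact Mk_zero_zero
  | succ n ih =>
    rw [Mk_succ_succ, ih, Mk_eq_zero (by omega), Mk_eq_zero (by omega)]
    ring

lemma sum_shift (i j N : ℕ) (hj : j < N) :
    ∑ k ∈ Finset.range (N+1), Mk (i+1) k * Mk j k
      = sVar * (Mk i 0 * Mk j 0)
        + (∑ k ∈ Finset.range N, Mk i k * Mk j (k+1))
        + (∑ k ∈ Finset.range N, Mk i (k+1) * Mk j k)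
        + tVar * ∑ k ∈ Finset.range N, Mk i (k+1) * Mk j (k+1) := by
  have h1 : ∑ k ∈ Finset.range (N+1), Mk (i+1) k * Mk j k
      = (∑ k ∈ Finset.range N, Mk (i+1) (k+1) * Mk j (k+1)) + Mk (i+1) 0 * Mk j 0 :=
    Finset.sum_range_succ' _ N
  have h2 : ∀ k ∈ Finset.range N, Mk (i+1) (k+1) * Mk j (k+1)
      = Mk i k * Mk j (k+1) + tVar * (Mk i (k+1) * Mk j (k+1)) + Mk i (k+2) * Mk j (k+1) := by
    intro k _; rw [Mk_succ_succ]; ring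
  have h3 : ∑ k ∈ Finset.range (N+1), Mk i (k+1) * Mk j k
      = (∑ k ∈ Finset.range N, Mk i (k+2) * Mk j (k+1)) + Mk i 1 * Mk j 0 :=
    Finset.sum_range_succ' _ N
  have h4 : ∑ k ∈ Finset.range (N+1), Mk i (k+1) * Mk j k
      = (∑ k ∈ Finset.range N, Mk i (k+1) * Mk j k) + Mk i (N+1) * Mk j N :=
    Finset.sum_range_succ _ N
  have h5 : Mk j N = 0 := Mk_eq_zero hj
  have h6 : (∑ k ∈ Finset.range N, Mk i (k+2) * Mk j (k+1)) + Mk i 1 * Mk j 0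
      = ∑ k ∈ Finset.range N, Mk i (k+1) * Mk j k := by
    rw [← h3, h4, h5]; ring
  rw [h1, Finset.sum_congr rfl h2, Finset.sum_add_distrib, Finset.sum_add_distrib,
    ← Finset.mul_sum, Mk_succ_zero]
  linear_combination h6

lemma sum_swap_step (i j N : ℕ) (hi : i < N) (hj : j < N) :
    ∑ k ∈ Finset.range (N+1), Mk (i+1) k * Mk j k
      = ∑ k ∈ Finset.range (N+1), Mk i k * Mk (j+1) k := by
  have e : ∑ k ∈ Finset.range (N+1), Mk i k * Mk (j+1) k
      = ∑ k ∈ Finset.range (N+1), Mk (j+1) k * Mk i k :=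
    Finset.sum_congr rfl (fun k _ => mul_comm _ _)
  rw [e, sum_shift i j N hj, sum_shift j i N hi]
  have e1 : ∑ k ∈ Finset.range N, Mk j k * Mk i (k+1)
      = ∑ k ∈ Finset.range N, Mk i (k+1) * Mk j k :=
    Finset.sum_congr rfl (fun k _ => mul_comm _ _)
  have e2 : ∑ k ∈ Finset.range N, Mk j (k+1) * Mk i k
      = ∑ k ∈ Finset.range N, Mk i k * Mk j (k+1) :=
    Finset.sum_congr rfl (fun k _ => mul_comm _ _)
  have e3 : ∑ k ∈ Finset.range N, Mk j (k+1) * Mk i (k+1)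
      = ∑ k ∈ Finset.range N, Mk i (k+1) * Mk j (k+1) :=
    Finset.sum_congr rfl (fun k _ => mul_comm _ _)
  linear_combination - e1 - e2 - tVar * e3

lemma sum_Mk_mul (j : ℕ) : ∀ i N : ℕ, i + j ≤ N →
    ∑ k ∈ Finset.range (N+1), Mk i k * Mk j k = Mk (i+j) 0 := by
  induction j with
  | zero =>
    intro i N _
    rw [Finset.sum_eq_single_of_mem 0 (Finset.mem_range.2 (by omega))]
    · rw [Mk_zero_zero, mul_one]; congr 1
    · intro k _ hk
      obtain ⟨m, rfl⟩ : ∃ m, k = m + 1 := ⟨k - 1, by omega⟩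
      rw [Mk_zero_succ]; ring
  | succ j ih =>
    intro i N h
    rw [← sum_swap_step i j N (by omega) (by omega), ih (i+1) N (by omega)]
    congr 1
    omega

/-- diagonal weights of the Jacobi matrix -/
noncomputable def diagw (m : ℕ) : R := if m = 0 then sVar else tVar

/-- tridiagonal entries -/
noncomputable def tri (i j : ℕ) : R :=
  (if i = j then diagw i else 0) + (if i + 1 = j then 1 else 0) + (if i = j + 1 then 1 else 0)

lemma tri_symm (i j : ℕ) : tri i j = tri j i := by
  unfold tri
  rcases eq_or_ne i j with rfl | h
  · rfl
  · rw [if_neg h, if_neg (Ne.symm h)]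
    by_cases h1 : i + 1 = j
    · rw [if_pos h1, if_neg (by omega), if_neg (by omega), if_pos (by omega)]; ring
    · by_cases h2 : i = j + 1
      · rw [if_neg h1, if_pos h2, if_pos (by omega), if_neg (by omega)]; ring
      · rw [if_neg h1, if_neg h2, if_neg (by omega), if_neg (by omega)]

noncomputable def matA (n : ℕ) : Matrix (Fin n) (Fin n) R := Matrix.of fun i k => Mk i k

noncomputable def matT (n : ℕ) : Matrix (Fin n) (Fin n) R := Matrix.of fun i j => tri i j

noncomputable def matE (n : ℕ) : Matrix (Fin n) (Fin n) R :=
  Matrix.of fun i j => if (i : ℕ) + 1 = n ∧ (j : ℕ) + 1 = n then 1 else 0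

lemma matT_symm (n : ℕ) : (matT n)ᵀ = matT n := by
  refine Matrix.ext fun i j => ?_
  exact tri_symm j i

lemma matE_symm (n : ℕ) : (matE n)ᵀ = matE n := by
  refine Matrix.ext fun i j => ?_
  simp only [matE, Matrix.transpose_apply, Matrix.of_apply]
  exact if_congr and_comm rfl rfl

lemma det_matA (n : ℕ) : (matA n).det = 1 := by
  rw [Matrix.det_of_lowerTriangular (matA n)
    (fun i j h => Mk_eq_zero (by exact_mod_cast h))]
  rw [Finset.prod_eq_one]
  intro i _
  exact Mk_diag i

/-- the key entrywise computation : `A * T = [Mk (i+1) k]`. -/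
lemma natsum_AT (n i k : ℕ) (hi : i < n) (hk : k < n) :
    ∑ j ∈ Finset.range n, Mk i j * tri j k = Mk (i + 1) k := by
  unfold tri
  have split : ∀ j, Mk i j * ((if j = k then diagw j else 0) + (if j + 1 = k then 1 else 0)
      + (if j = k + 1 then 1 else 0))
      = (if j = k then Mk i j * diagw j else 0) + (if j + 1 = k then Mk i j else 0)
        + (if j = k + 1 then Mk i j else 0) := by
    intro j
    split_ifs <;> ring
  rw [Finset.sum_congr rfl (fun j _ => split j), Finset.sum_add_distrib,
    Finset.sum_add_distrib]
  have s1 : ∑ j ∈ Finset.range n, (if j = k then Mk i j * diagw j else 0)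
      = Mk i k * diagw k := by
    rw [Finset.sum_ite_eq' (Finset.range n) k (fun j => Mk i j * diagw j),
      if_pos (Finset.mem_range.2 hk)]
  have s3 : ∑ j ∈ Finset.range n, (if j = k + 1 then Mk i j else 0) = Mk i (k+1) := by
    rw [Finset.sum_ite_eq' (Finset.range n) (k+1) (fun j => Mk i j)]
    split_ifs with h
    · rfl
    · rw [Mk_eq_zero]
      rw [Finset.mem_range] at h
      omega
  rw [s1, s3]
  rcases Nat.eq_zero_or_pos k with rfl | hkpos
  · have s2 : ∑ j ∈ Finset.range n, (if j + 1 = 0 then Mk i j else 0) = 0 := by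
      apply Finset.sum_eq_zero
      intro j _
      rw [if_neg (by omega)]
    rw [s2, Mk_succ_zero]
    unfold diagw
    rw [if_pos rfl]
    ring
  · obtain ⟨m, rfl⟩ : ∃ m, k = m + 1 := ⟨k - 1, by omega⟩
    have s2 : ∑ j ∈ Finset.range n, (if j + 1 = m + 1 then Mk i j else 0) = Mk i m := by
      have : ∀ j, (if j + 1 = m + 1 then Mk i j else 0) = (if j = m then Mk i j else 0) := by
        intro j; split_ifs with h1 h2 <;> first | rfl | omega
      rw [Finset.sum_congr rfl (fun j _ => this j),
        Finset.sum_ite_eq' (Finset.range n) m (fun j => Mk i j),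
        if_pos (Finset.mem_range.2 (by omega))]
    rw [s2, Mk_succ_succ]
    unfold diagw
    rw [if_neg (by omega)]
    ring

lemma matA_mul_matT (n : ℕ) :
    matA n * matT n = Matrix.of (fun i k : Fin n => Mk (i + 1) k) := by
  refine Matrix.ext fun i k => ?_
  rw [Matrix.mul_apply]
  show (∑ j : Fin n, Mk i j * tri j k) = Mk (i+1) k
  rw [Fin.sum_univ_eq_sum_range (fun j => Mk i j * tri j k) n]
  exact natsum_AT n i k i.isLt k.isLt

lemma matA_mul_matE (n : ℕ) : matA n * matE n = matE n := by
  refine Matrix.ext fun i l => ?_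
  rw [Matrix.mul_apply]
  show (∑ k : Fin n, Mk i k * (if (k : ℕ) + 1 = n ∧ (l : ℕ) + 1 = n then 1 else 0))
    = (if (i : ℕ) + 1 = n ∧ (l : ℕ) + 1 = n then 1 else 0)
  by_cases hl : (l : ℕ) + 1 = n
  · simp only [hl, and_true]
    obtain ⟨m, rfl⟩ : ∃ m, n = m + 1 := ⟨n - 1, by omega⟩
    rw [Fin.sum_univ_eq_sum_range (fun k => Mk i k * (if k + 1 = m + 1 then 1 else 0)) (m+1)]
    have e : ∀ k, Mk (i : ℕ) k * (if k + 1 = m + 1 then 1 else 0)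
        = (if k = m then Mk i k else 0) := by
      intro k; split_ifs <;> first | omega | ring
    rw [Finset.sum_congr rfl (fun k _ => e k),
      Finset.sum_ite_eq' (Finset.range (m+1)) m (fun k => Mk i k),
      if_pos (Finset.mem_range.2 (by omega))]
    rcases eq_or_ne ((i : ℕ) + 1) (m + 1) with h | h
    · rw [if_pos h, show (i:ℕ) = m by omega, Mk_diag]
    · rw [if_neg h, Mk_eq_zero (by have := i.isLt; omega)]
  · simp only [hl, and_false, if_false, mul_zero, Finset.sum_const_zero]

lemma natsum_BB (n i j : ℕ) (hi : i < n) (hj : j < n) :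
    (∑ k ∈ Finset.range n, Mk (i+1) k * Mk (j+1) k)
      + (if i + 1 = n ∧ j + 1 = n then 1 else 0) = Mk (2 + i + j) 0 := by
  have big := sum_Mk_mul (j+1) (i+1) (n + i + j + 2) (by omega)
  rw [show (n + i + j + 2) + 1 = n + (i + j + 3) by ring] at big
  rw [Finset.sum_range_add (fun k => Mk (i+1) k * Mk (j+1) k) n (i+j+3)] at big
  have tail : ∑ k ∈ Finset.range (i+j+3), Mk (i+1) (n + k) * Mk (j+1) (n + k)
      = (if i + 1 = n ∧ j + 1 = n then 1 else 0) := by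
    rw [Finset.sum_eq_single_of_mem 0 (Finset.mem_range.2 (by omega))]
    · rcases eq_or_ne (i+1) n with h1 | h1
      · rcases eq_or_ne (j+1) n with h2 | h2
        · rw [if_pos ⟨h1, h2⟩]
          have e1 : Mk (i+1) (n+0) = 1 := by rw [Nat.add_zero, ← h1, Mk_diag]
          have e2 : Mk (j+1) (n+0) = 1 := by rw [Nat.add_zero, ← h2, Mk_diag]
          rw [e1, e2, mul_one]
        · rw [if_neg (by tauto), Mk_eq_zero (show j + 1 < n + 0 by omega), mul_zero]
      · rw [if_neg (by tauto), Mk_eq_zero (show i + 1 < n + 0 by omega), zero_mul]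
    · intro k _ hk
      rw [Mk_eq_zero (show i + 1 < n + k by omega)]; ring
  rw [tail] at big
  rw [show (i + 1 + (j + 1)) = 2 + i + j by ring] at big
  exact big

lemma hank_factor (n : ℕ) :
    Matrix.of (fun i j : Fin n => Mk (2 + i + j) 0)
      = matA n * (matT n * matT n + matE n) * (matA n)ᵀ := by
  have hB : matA n * (matT n * matT n) * (matA n)ᵀ
      = (matA n * matT n) * (matA n * matT n)ᵀ := by
    rw [Matrix.transpose_mul, matT_symm, ← Matrix.mul_assoc, Matrix.mul_assoc]
  have hE : matA n * matE n * (matA n)ᵀ = matE n := by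
    rw [matA_mul_matE]
    calc matE n * (matA n)ᵀ = ((matA n) * (matE n)ᵀ)ᵀ := by
          rw [Matrix.transpose_mul, Matrix.transpose_transpose]
      _ = matE n := by rw [matE_symm, matA_mul_matE, matE_symm]
  rw [Matrix.mul_add, Matrix.add_mul, hE, hB, matA_mul_matT]
  refine Matrix.ext fun i j => ?_
  show Mk (2 + i + j) 0 = (∑ k : Fin n, Mk (i+1) k * Mk (j+1) k)
    + (if (i : ℕ) + 1 = n ∧ (j : ℕ) + 1 = n then 1 else 0)
  rw [Fin.sum_univ_eq_sum_range (fun k => Mk (i+1) k * Mk (j+1) k) n,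
    natsum_BB n i j i.isLt j.isLt]

lemma det_hank (n : ℕ) :
    (Matrix.of (fun i j : Fin n => Mk (2 + i + j) 0)).det
      = (matT n * matT n + matE n).det := by
  rw [hank_factor, Matrix.det_mul, Matrix.det_mul, det_matA, Matrix.det_transpose, det_matA,
    one_mul, mul_one]

noncomputable def hPol : ℕ → R
  | 0 => 1
  | 1 => sVar
  | n + 2 => tVar * hPol (n + 1) - hPol n

lemma neg_one_pow_even (n : ℕ) : ((-1 : R)) ^ (n + n) = 1 := by
  rw [show n + n = 2 * n by ring, pow_mul]
  norm_num

lemma neg_one_pow_odd (n : ℕ) : ((-1 : R)) ^ (n + 1 + n) = -1 := by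
  rw [show n + 1 + n = 2 * n + 1 by ring, pow_succ, pow_mul]
  norm_num

lemma matT_submatrix (n : ℕ) :
    (matT (n+1)).submatrix Fin.castSucc Fin.castSucc = matT n := by
  refine Matrix.ext fun i j => ?_
  show tri ((Fin.castSucc i : Fin (n+1)) : ℕ) ((Fin.castSucc j : Fin (n+1)) : ℕ) = tri i j
  rw [Fin.coe_castSucc, Fin.coe_castSucc]

lemma tri_zero_of_far {i j : ℕ} (h : i + 1 < j ∨ j + 1 < i) : tri i j = 0 := by
  unfold tri
  rw [if_neg (by omega), if_neg (by omega), if_neg (by omega)]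
  ring

lemma det_matT (n : ℕ) : (matT n).det = hPol n := by
  induction n using Nat.twoStepInduction with
  | zero => simp [hPol]
  | one =>
    rw [Matrix.det_fin_one]
    show tri 0 0 = hPol 1
    unfold tri diagw hPol
    norm_num
  | more n ih1 ih2 =>
    rw [Matrix.det_succ_row (matT (n+2)) (Fin.last (n+1))]
    rw [Fin.sum_univ_castSucc, Fin.sum_univ_castSucc]
    have hzero : ∀ j : Fin n,
        ((-1 : R)) ^ ((Fin.last (n+1) : ℕ) + ((Fin.castSucc (Fin.castSucc j) : Fin (n+2)) : ℕ))
          * matT (n+2) (Fin.last (n+1)) (Fin.castSucc (Fin.castSucc j))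
          * ((matT (n+2)).submatrix (Fin.last (n+1)).succAbove
              (Fin.castSucc (Fin.castSucc j)).succAbove).det = 0 := by
      intro j
      have : matT (n+2) (Fin.last (n+1)) (Fin.castSucc (Fin.castSucc j)) = 0 := by
        show tri (n+1) ((j : ℕ)) = 0
        exact tri_zero_of_far (Or.inr (by have := j.isLt; omega))
      rw [this]; ring
    rw [Finset.sum_eq_zero (fun j _ => hzero j), zero_add]
    -- the j = castSucc (last n) term
    have hcol : matT (n+2) (Fin.last (n+1)) (Fin.castSucc (Fin.last n)) = 1 := by
      show tri (n+1) n = 1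
      unfold tri
      rw [if_neg (by omega), if_neg (by omega), if_pos rfl]
      ring
    have hdiag : matT (n+2) (Fin.last (n+1)) (Fin.last (n+1)) = tVar := by
      show tri (n+1) (n+1) = tVar
      unfold tri diagw
      rw [if_pos rfl, if_neg (by omega), if_neg (by omega), if_neg (by omega)]
      ring
    -- minor for the diagonal term
    have hminor2 : (matT (n+2)).submatrix (Fin.last (n+1)).succAbove
        (Fin.last (n+1)).succAbove = matT (n+1) := by
      rw [Fin.succAbove_last, matT_submatrix]
    -- minor for the subdiagonal term
    have hminor1 : ((matT (n+2)).submatrix (Fin.last (n+1)).succAbove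
        (Fin.castSucc (Fin.last n)).succAbove).det = (matT n).det := by
      set C := (matT (n+2)).submatrix (Fin.last (n+1)).succAbove
        (Fin.castSucc (Fin.last n)).succAbove with hC
      have hCentry : ∀ (i : Fin (n+1)) (j : Fin (n+1)),
          C i j = tri (i : ℕ) (((Fin.castSucc (Fin.last n) : Fin (n+2)).succAbove j : ℕ)) := by
        intro i j
        show tri (((Fin.last (n+1)).succAbove i : ℕ)) _ = _
        rw [Fin.succAbove_last, Fin.coe_castSucc]
      rw [Matrix.det_succ_column C (Fin.last n)]
      rw [Fin.sum_univ_castSucc]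
      have hz2 : ∀ i : Fin n,
          ((-1 : R)) ^ (((Fin.castSucc i : Fin (n+1)) : ℕ) + ((Fin.last n : ℕ)))
            * C (Fin.castSucc i) (Fin.last n)
            * (C.submatrix (Fin.castSucc i).succAbove (Fin.last n).succAbove).det = 0 := by
        intro i
        have hcol' : ((Fin.castSucc (Fin.last n) : Fin (n+2)).succAbove (Fin.last n) : ℕ)
            = n + 1 := by
          rw [Fin.succAbove_of_le_castSucc _ _ (by rw [Fin.le_def])]
          simp
        have : C (Fin.castSucc i) (Fin.last n) = 0 := by
          rw [hCentry, hcol']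
          exact tri_zero_of_far (Or.inl (by have := i.isLt; simp only [Fin.coe_castSucc]; omega))
        rw [this]; ring
      rw [Finset.sum_eq_zero (fun i _ => hz2 i), zero_add]
      have hcol' : ((Fin.castSucc (Fin.last n) : Fin (n+2)).succAbove (Fin.last n) : ℕ)
          = n + 1 := by
        rw [Fin.succAbove_of_le_castSucc _ _ (by rw [Fin.le_def])]
        simp
      have hlastentry : C (Fin.last n) (Fin.last n) = 1 := by
        rw [hCentry, hcol']
        show tri n (n+1) = 1
        unfold tri
        rw [if_neg (by omega), if_pos rfl, if_neg (by omega)]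
        ring
      have hsub : C.submatrix (Fin.last n).succAbove (Fin.last n).succAbove = matT n := by
        rw [Fin.succAbove_last]
        refine Matrix.ext fun i j => ?_
        have : ((Fin.castSucc (Fin.last n) : Fin (n+2)).succAbove (Fin.castSucc j) : ℕ)
            = (j : ℕ) := by
          rw [Fin.succAbove_of_castSucc_lt _ _ (by simp [Fin.lt_def])]
          simp
        show C (Fin.castSucc i) (Fin.castSucc j) = tri i j
        rw [hCentry, this, Fin.coe_castSucc]
      rw [hlastentry, hsub, neg_one_pow_even]
      ring
    rw [hcol, hdiag, hminor1, hminor2, ih1, ih2]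
    have hsign1 : ((-1 : R)) ^ ((Fin.last (n+1) : ℕ) + ((Fin.castSucc (Fin.last n) : Fin (n+2)) : ℕ)) = -1 := by
      rw [Fin.val_last, Fin.coe_castSucc, Fin.val_last]
      exact neg_one_pow_odd n
    have hsign2 : ((-1 : R)) ^ ((Fin.last (n+1) : ℕ) + ((Fin.last (n+1) : Fin (n+2)) : ℕ)) = 1 := by
      rw [Fin.val_last]
      exact neg_one_pow_even (n+1)
    rw [hsign1, hsign2]
    show (-1) * 1 * hPol n + 1 * tVar * hPol (n+1) = hPol (n+2)
    rw [show hPol (n+2) = tVar * hPol (n+1) - hPol n from rfl]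
    ring

noncomputable def DD : ℕ → R
  | 0 => 1
  | n + 1 => DD (n) + hPol (n + 1) ^ 2

lemma tri_last (n : ℕ) (i : Fin n) : tri (i : ℕ) n = (if (i : ℕ) + 1 = n then 1 else 0) := by
  unfold tri
  have h1 : ¬ ((i : ℕ) = n) := by have := i.isLt; omega
  have h3 : ¬ ((i : ℕ) = n + 1) := by have := i.isLt; omega
  rw [if_neg h1, if_neg h3]
  split_ifs <;> ring

lemma tri_last' (n : ℕ) (i : Fin n) : tri n (i : ℕ) = (if (i : ℕ) + 1 = n then 1 else 0) := by
  rw [tri_symm]; exact tri_last n i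

lemma TT_submatrix (n : ℕ) :
    (matT (n+1) * matT (n+1)).submatrix Fin.castSucc Fin.castSucc
      = matT n * matT n + matE n := by
  refine Matrix.ext fun i j => ?_
  rw [Matrix.submatrix_apply, Matrix.mul_apply, Fin.sum_univ_castSucc]
  rw [Matrix.add_apply, Matrix.mul_apply]
  have h1 : ∀ k : Fin n, matT (n+1) (Fin.castSucc i) (Fin.castSucc k)
      * matT (n+1) (Fin.castSucc k) (Fin.castSucc j) = matT n i k * matT n k j := by
    intro k; rfl
  rw [Finset.sum_congr rfl (fun k _ => h1 k)]
  congr 1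
  show tri ((Fin.castSucc i : Fin (n+1)) : ℕ) ((Fin.last n : ℕ))
      * tri ((Fin.last n : ℕ)) ((Fin.castSucc j : Fin (n+1)) : ℕ) = matE n i j
  rw [Fin.coe_castSucc, Fin.coe_castSucc, Fin.val_last, tri_last n i, tri_last' n j]
  show _ = if (i : ℕ) + 1 = n ∧ (j : ℕ) + 1 = n then 1 else 0
  by_cases h1 : (i : ℕ) + 1 = n <;> by_cases h2 : (j : ℕ) + 1 = n
  · rw [if_pos h1, if_pos h2, if_pos ⟨h1, h2⟩]; ring
  · rw [if_pos h1, if_neg h2, if_neg (by tauto)]; ring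
  · rw [if_neg h1, if_pos h2, if_neg (by tauto)]; ring
  · rw [if_neg h1, if_neg h2, if_neg (by tauto)]; ring

lemma det_TTE (n : ℕ) : (matT n * matT n + matE n).det = DD n := by
  induction n with
  | zero =>
    rw [show DD 0 = 1 from rfl]
    exact Matrix.det_isEmpty
  | succ n ih =>
    set M := matT (n+1) * matT (n+1) with hM
    have hupd : M + matE (n+1)
        = M.updateCol (Fin.last n)
            ((fun i => M i (Fin.last n)) + (fun i => if i = Fin.last n then 1 else 0)) := by
      refine Matrix.ext fun i j => ?_
      rw [Matrix.updateCol_apply, Matrix.add_apply]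
      simp only [Pi.add_apply]
      rcases eq_or_ne j (Fin.last n) with rfl | hj
      · rw [if_pos rfl]
        congr 1
        show (if (i : ℕ) + 1 = n + 1 ∧ ((Fin.last n : ℕ)) + 1 = n + 1 then 1 else 0) = _
        rw [Fin.val_last]
        have : ((i : ℕ) + 1 = n + 1 ∧ n + 1 = n + 1) ↔ i = Fin.last n := by
          rw [Fin.ext_iff, Fin.val_last]
          omega
        rw [if_congr this rfl rfl]
      · rw [if_neg hj]
        have : ¬ ((i : ℕ) + 1 = n + 1 ∧ ((j : ℕ)) + 1 = n + 1) := by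
          rintro ⟨-, h2⟩
          exact hj (Fin.ext (by rw [Fin.val_last]; omega))
        show M i j + (if _ ∧ _ then 1 else 0) = M i j
        rw [if_neg this]
        ring
    rw [hupd, Matrix.det_updateCol_add, Matrix.updateCol_eq_self, hM,
      Matrix.det_mul, det_matT]
    have hdet2 : (M.updateCol (Fin.last n)
        (fun i => if i = Fin.last n then 1 else 0)).det
        = (matT n * matT n + matE n).det := by
      set U := M.updateCol (Fin.last n) (fun i => if i = Fin.last n then 1 else 0) with hU
      rw [Matrix.det_succ_column U (Fin.last n), Fin.sum_univ_castSucc]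
      have hz : ∀ i : Fin n,
          ((-1 : R)) ^ (((Fin.castSucc i : Fin (n+1)) : ℕ) + ((Fin.last n : ℕ)))
            * U (Fin.castSucc i) (Fin.last n)
            * (U.submatrix (Fin.castSucc i).succAbove (Fin.last n).succAbove).det = 0 := by
        intro i
        have : U (Fin.castSucc i) (Fin.last n) = 0 := by
          rw [hU, Matrix.updateCol_apply, if_pos rfl,
            if_neg (Fin.ne_of_lt (Fin.castSucc_lt_last i))]
        rw [this]; ring
      rw [Finset.sum_eq_zero (fun i _ => hz i), zero_add]
      have h1 : U (Fin.last n) (Fin.last n) = 1 := by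
        rw [hU, Matrix.updateCol_apply, if_pos rfl, if_pos rfl]
      have h2 : U.submatrix (Fin.last n).succAbove (Fin.last n).succAbove
          = matT n * matT n + matE n := by
        rw [Fin.succAbove_last, ← TT_submatrix n]
        refine Matrix.ext fun i j => ?_
        rw [Matrix.submatrix_apply, Matrix.submatrix_apply, hU,
          Matrix.updateCol_apply,
          if_neg (Fin.ne_of_lt (Fin.castSucc_lt_last j))]
      rw [h1, h2, neg_one_pow_even]
      ring
    rw [hdet2, ih]
    rw [show DD (n+1) = DD n + hPol (n+1) ^ 2 from rfl]
    ring

noncomputable def rPol : ℕ → R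
  | 0 => 1
  | n + 1 => hPol (n + 1) ^ 2 - hPol n ^ 2

lemma one_sub_X_mul (f g : ℕ → R) (h0 : g 0 = f 0)
    (hs : ∀ n, g (n + 1) = f (n + 1) - f n) :
    (1 - PowerSeries.X) * PowerSeries.mk f = PowerSeries.mk g := by
  apply PowerSeries.ext
  intro n
  rw [sub_mul, one_mul, map_sub]
  cases n with
  | zero =>
    rw [PowerSeries.coeff_zero_X_mul, PowerSeries.coeff_mk, PowerSeries.coeff_mk, h0, sub_zero]
  | succ n =>
    rw [PowerSeries.coeff_succ_X_mul, PowerSeries.coeff_mk, PowerSeries.coeff_mk,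
      PowerSeries.coeff_mk, hs]

lemma step1 : (1 - PowerSeries.X) * PowerSeries.mk (fun n => DD n)
    = PowerSeries.mk (fun n => hPol n ^ 2) :=
  one_sub_X_mul _ _ (by show hPol 0 ^ 2 = DD 0; rw [show hPol 0 = 1 from rfl, show DD 0 = 1 from rfl]; norm_num)
    (fun n => by
      show hPol (n+1) ^ 2 = DD (n+1) - DD n
      rw [show DD (n+1) = DD n + hPol (n+1) ^ 2 from rfl]
      ring)

lemma step2 : (1 - PowerSeries.X) * PowerSeries.mk (fun n => hPol n ^ 2)
    = PowerSeries.mk rPol :=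
  one_sub_X_mul _ _ (by show rPol 0 = hPol 0 ^ 2; rw [show rPol 0 = 1 from rfl,
    show hPol 0 = 1 from rfl]; norm_num) (fun n => rfl)

lemma key3 (m : ℕ) : rPol (m+3) + (2 - tVar ^ 2) * rPol (m+2) + rPol (m+1) = 0 := by
  have e2 : hPol (m+2) = tVar * hPol (m+1) - hPol m := rfl
  have e3 : hPol (m+3) = tVar * hPol (m+2) - hPol (m+1) := rfl
  rw [show rPol (m+3) = hPol (m+3) ^ 2 - hPol (m+2) ^ 2 from rfl,
    show rPol (m+2) = hPol (m+2) ^ 2 - hPol (m+1) ^ 2 from rfl,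
    show rPol (m+1) = hPol (m+1) ^ 2 - hPol m ^ 2 from rfl, e3, e2]
  ring

lemma step3 : (1 + PowerSeries.C (2 - tVar ^ 2) * PowerSeries.X + PowerSeries.X ^ 2)
      * PowerSeries.mk rPol
    = 1 + PowerSeries.C (1 + sVar ^ 2 - tVar ^ 2) * PowerSeries.X
      + PowerSeries.C ((sVar - tVar) ^ 2) * PowerSeries.X ^ 2 := by
  apply PowerSeries.ext
  intro n
  have expand : (1 + PowerSeries.C (2 - tVar ^ 2) * PowerSeries.X + PowerSeries.X ^ 2)
      * PowerSeries.mk rPol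
      = PowerSeries.mk rPol
        + PowerSeries.C (2 - tVar ^ 2) * (PowerSeries.X * PowerSeries.mk rPol)
        + PowerSeries.X ^ 2 * PowerSeries.mk rPol := by ring
  rw [expand, map_add, map_add, map_add, map_add,
    PowerSeries.coeff_C_mul, PowerSeries.coeff_C_mul, PowerSeries.coeff_C_mul,
    PowerSeries.coeff_X_pow_mul' (PowerSeries.mk rPol) 2 n,
    PowerSeries.coeff_mk, PowerSeries.coeff_one, PowerSeries.coeff_X,
    PowerSeries.coeff_X_pow]
  rcases n with _ | n
  · norm_num
    rw [show rPol 0 = 1 from rfl]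
  rcases n with _ | n
  · rw [PowerSeries.coeff_succ_X_mul, PowerSeries.coeff_mk]
    norm_num
    rw [show rPol 1 = hPol 1 ^ 2 - hPol 0 ^ 2 from rfl, show rPol 0 = 1 from rfl,
      show hPol 1 = sVar from rfl, show hPol 0 = 1 from rfl]
    ring
  rcases n with _ | m
  · rw [PowerSeries.coeff_succ_X_mul, PowerSeries.coeff_mk]
    norm_num
    rw [show rPol 2 = hPol 2 ^ 2 - hPol 1 ^ 2 from rfl,
      show rPol 1 = hPol 1 ^ 2 - hPol 0 ^ 2 from rfl,
      show rPol 0 = 1 from rfl,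
      show hPol 2 = tVar * hPol 1 - hPol 0 from rfl,
      show hPol 1 = sVar from rfl, show hPol 0 = 1 from rfl]
    ring
  · rw [PowerSeries.coeff_succ_X_mul, PowerSeries.coeff_mk]
    rw [if_pos (show 2 ≤ m + 3 by omega), if_neg (show ¬ (m + 3 = 0) by omega),
      if_neg (show ¬ (m + 3 = 1) by omega), if_neg (show ¬ (m + 3 = 2) by omega)]
    rw [show m + 3 - 2 = m + 1 by omega, PowerSeries.coeff_mk]
    have h := key3 m
    norm_num at h ⊢
    linear_combination h

/-- `(1-x)^2 (1 + (2-t^2)x + x^2) · ∑_n d_2(n,t,s) x^n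
  = 1 + (1+s^2-t^2)x + (s-t)^2 x^2` in `(ℤ[t,s])[[x]]`,
where `d_2(n,t,s) = det(M_{2+i+j,0}(t,s))`. -/
theorem genfun_hankel_det_two_weights_shift_two :
    (1 - PowerSeries.X) ^ 2 *
      (1 + PowerSeries.C (2 - tVar ^ 2) * PowerSeries.X +
        PowerSeries.X ^ 2) *
      PowerSeries.mk (fun n =>
        Matrix.det (Matrix.of fun i j : Fin n =>
          motzkinPoly2 (2 + (i : ℕ) + (j : ℕ)) 0)) =
      1 + PowerSeries.C (1 + sVar ^ 2 - tVar ^ 2) * PowerSeries.X +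
        PowerSeries.C ((sVar - tVar) ^ 2) * PowerSeries.X ^ 2 := by
  have hdet : (fun n => Matrix.det (Matrix.of fun i j : Fin n =>
      motzkinPoly2 (2 + (i : ℕ) + (j : ℕ)) 0)) = fun n => DD n := by
    funext n
    have e : (Matrix.of fun i j : Fin n => motzkinPoly2 (2 + (i : ℕ) + (j : ℕ)) 0)
        = Matrix.of fun i j : Fin n => Mk (2 + (i : ℕ) + (j : ℕ)) 0 := by
      refine Matrix.ext fun i j => ?_
      show motzkinPoly2 _ (0 : ℤ) = motzkinPoly2 _ (((0 : ℕ) : ℤ))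
      norm_num
    rw [e, det_hank, det_TTE]
  rw [hdet]
  calc (1 - PowerSeries.X) ^ 2 *
      (1 + PowerSeries.C (2 - tVar ^ 2) * PowerSeries.X + PowerSeries.X ^ 2) *
      PowerSeries.mk (fun n => DD n)
      = (1 + PowerSeries.C (2 - tVar ^ 2) * PowerSeries.X + PowerSeries.X ^ 2) *
        ((1 - PowerSeries.X) * ((1 - PowerSeries.X) * PowerSeries.mk (fun n => DD n))) := by
          ring
    _ = (1 + PowerSeries.C (2 - tVar ^ 2) * PowerSeries.X + PowerSeries.X ^ 2) *
        ((1 - PowerSeries.X) * PowerSeries.mk (fun n => hPol n ^ 2)) := by rw [step1]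
    _ = (1 + PowerSeries.C (2 - tVar ^ 2) * PowerSeries.X + PowerSeries.X ^ 2) *
        PowerSeries.mk rPol := by rw [step2]
    _ = _ := step3
end
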